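/- Let f(x) = cos(x_d) - 1 + (1/2)·Σ_{i=1}^{d-1} x_i². Then: (i) ∇f and ∇²f are 1-Lipschitz; (ii) the critical points of f are exactly the points (0,…,0,kπ) for k ∈ ℤ, and at each critical point all eigenvalues of the Hessian have absolute value at least 1 (the μ-Morse property with μ=1); (iii) inf f = -2; (iv) the origin is a saddle point with f(0) = 0; (v) for every x ∈ ℝ^d, the distance from x to the nearest critical point is at most (π/2)·‖∇f(x)‖. -/

import Mathlib

open RealInnerProductSpace

namespace WCF

variable {d : ℕ}

lemma proj_hasFDerivAt (i : Fin d) (x : EuclideanSpace ℝ (Fin d)) :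
    HasFDerivAt (fun y : EuclideanSpace ℝ (Fin d) => y i)
      (EuclideanSpace.proj (𝕜 := ℝ) i) x :=
  (EuclideanSpace.proj (𝕜 := ℝ) i).hasFDerivAt

noncomputable def gFun (last : Fin d) (x : EuclideanSpace ℝ (Fin d)) :
    EuclideanSpace ℝ (Fin d) :=
  x - (x last + Real.sin (x last)) • EuclideanSpace.single last (1 : ℝ)

lemma gFun_apply (last : Fin d) (x : EuclideanSpace ℝ (Fin d)) (i : Fin d) :
    gFun last x i = if i = last then -Real.sin (x last) else x i := by
  simp only [gFun, PiLp.sub_apply, PiLp.smul_apply, EuclideanSpace.single_apply,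
    smul_eq_mul]
  split
  · rename_i h; subst h; ring
  · ring

noncomputable def HFun (last : Fin d) (x : EuclideanSpace ℝ (Fin d)) :
    EuclideanSpace ℝ (Fin d) →L[ℝ] EuclideanSpace ℝ (Fin d) :=
  ContinuousLinearMap.id ℝ _ -
    ((EuclideanSpace.proj last : EuclideanSpace ℝ (Fin d) →L[ℝ] ℝ) +
      Real.cos (x last) • (EuclideanSpace.proj last)).smulRight
      (EuclideanSpace.single last (1 : ℝ))

lemma HFun_apply (last : Fin d) (x u : EuclideanSpace ℝ (Fin d)) (i : Fin d) :
    HFun last x u i = if i = last then -(Real.cos (x last) * u last) else u i := by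
  simp only [HFun, ContinuousLinearMap.sub_apply, ContinuousLinearMap.id_apply,
    ContinuousLinearMap.smulRight_apply, ContinuousLinearMap.add_apply,
    ContinuousLinearMap.smul_apply, PiLp.proj_apply, PiLp.sub_apply,
    PiLp.smul_apply, EuclideanSpace.single_apply, smul_eq_mul]
  split
  · rename_i h; subst h; ring
  · ring

lemma hasFDerivAt_gFun (last : Fin d) (x : EuclideanSpace ℝ (Fin d)) :
    HasFDerivAt (gFun last) (HFun last x) x := by
  have h1 : HasFDerivAt (fun y : EuclideanSpace ℝ (Fin d) => y last + Real.sin (y last))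
      ((EuclideanSpace.proj last : EuclideanSpace ℝ (Fin d) →L[ℝ] ℝ) +
        Real.cos (x last) • (EuclideanSpace.proj last)) x :=
    (proj_hasFDerivAt last x).add
      (by
        have := (Real.hasDerivAt_sin (x last)).comp_hasFDerivAt x (proj_hasFDerivAt last x)
        exact this)
  exact (hasFDerivAt_id x).sub (h1.smul_const _)

lemma hasGradientAt (last : Fin d) (f : EuclideanSpace ℝ (Fin d) → ℝ)
    (hf : ∀ x, f x = Real.cos (x last) - 1
      + (1 / 2) * ∑ i ∈ Finset.univ.erase last, (x i) ^ 2)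
    (x : EuclideanSpace ℝ (Fin d)) :
    HasGradientAt f (gFun last x) x := by
  rw [hasGradientAt_iff_hasFDerivAt]
  have h1 : HasFDerivAt f
      ((-Real.sin (x last)) • (EuclideanSpace.proj last : EuclideanSpace ℝ (Fin d) →L[ℝ] ℝ)
        + ∑ i ∈ Finset.univ.erase last,
            x i • (EuclideanSpace.proj i : EuclideanSpace ℝ (Fin d) →L[ℝ] ℝ)) x := by
    have hcos : HasFDerivAt (fun y : EuclideanSpace ℝ (Fin d) => Real.cos (y last))
        ((-Real.sin (x last)) • (EuclideanSpace.proj last :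
          EuclideanSpace ℝ (Fin d) →L[ℝ] ℝ)) x :=
      by
        have := (Real.hasDerivAt_cos (x last)).comp_hasFDerivAt x (proj_hasFDerivAt last x)
        exact this
    have hsum : HasFDerivAt (fun y : EuclideanSpace ℝ (Fin d) =>
        (1 / 2 : ℝ) * ∑ i ∈ Finset.univ.erase last, (y i) ^ 2)
        (∑ i ∈ Finset.univ.erase last,
          x i • (EuclideanSpace.proj i : EuclideanSpace ℝ (Fin d) →L[ℝ] ℝ)) x := by
      have h2 : ∀ i ∈ Finset.univ.erase last,
          HasFDerivAt (fun y : EuclideanSpace ℝ (Fin d) => (1/2 : ℝ) * (y i) ^ 2)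
            (x i • (EuclideanSpace.proj i : EuclideanSpace ℝ (Fin d) →L[ℝ] ℝ)) x := by
        intro i _
        have h3 := (((proj_hasFDerivAt i x).mul (proj_hasFDerivAt i x)).const_mul (1/2 : ℝ))
        refine (h3.congr_fderiv ?_).congr_of_eventuallyEq ?_
        · ext u
          simp only [ContinuousLinearMap.smul_apply, PiLp.proj_apply,
            ContinuousLinearMap.add_apply, smul_eq_mul]
          ring
        · filter_upwards with y; simp [sq]
      have h4 := HasFDerivAt.fun_sum h2
      refine h4.congr_of_eventuallyEq ?_
      filter_upwards with y
      rw [Finset.mul_sum]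
    have h5 := (hcos.sub_const 1).add hsum
    refine h5.congr_of_eventuallyEq ?_
    filter_upwards with y
    rw [hf y]
    rfl
  refine h1.congr_fderiv ?_
  symm
  apply ContinuousLinearMap.ext
  intro y
  simp only [InnerProductSpace.toDual_apply_apply, PiLp.inner_apply, RCLike.inner_apply,
    conj_trivial, ContinuousLinearMap.add_apply, ContinuousLinearMap.smul_apply,
    ContinuousLinearMap.sum_apply, PiLp.proj_apply, smul_eq_mul]
  rw [← Finset.sum_erase_add _ _ (Finset.mem_univ last)]
  rw [gFun_apply, if_pos rfl]
  rw [Finset.sum_congr rfl (fun i hi => by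
    rw [gFun_apply, if_neg (Finset.ne_of_mem_erase hi)])]
  rw [Finset.sum_congr rfl (fun i _ => mul_comm (y.ofLp i) (x.ofLp i))]
  ring

lemma gradient_eq (last : Fin d) (f : EuclideanSpace ℝ (Fin d) → ℝ)
    (hf : ∀ x, f x = Real.cos (x last) - 1
      + (1 / 2) * ∑ i ∈ Finset.univ.erase last, (x i) ^ 2) :
    gradient f = gFun last :=
  funext fun x => (hasGradientAt last f hf x).gradient

lemma fderiv_gradient_eq (last : Fin d) (f : EuclideanSpace ℝ (Fin d) → ℝ)
    (hf : ∀ x, f x = Real.cos (x last) - 1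
      + (1 / 2) * ∑ i ∈ Finset.univ.erase last, (x i) ^ 2)
    (x : EuclideanSpace ℝ (Fin d)) :
    fderiv ℝ (gradient f) x = HFun last x := by
  rw [gradient_eq last f hf]
  exact (hasFDerivAt_gFun last x).fderiv

end WCF

namespace WCF

lemma sin_lip : LipschitzWith 1 Real.sin := by
  apply lipschitzWith_of_nnnorm_deriv_le Real.differentiable_sin
  intro x
  rw [Real.deriv_sin]
  rw [← NNReal.coe_le_coe]
  simpa [Real.norm_eq_abs] using Real.abs_cos_le_one x

lemma cos_lip : LipschitzWith 1 Real.cos := by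
  apply lipschitzWith_of_nnnorm_deriv_le Real.differentiable_cos
  intro x
  rw [Real.deriv_cos']
  rw [← NNReal.coe_le_coe]
  simpa [Real.norm_eq_abs] using Real.abs_sin_le_one x

lemma abs_sin_sub (a b : ℝ) : |Real.sin a - Real.sin b| ≤ |a - b| := by
  have := sin_lip.dist_le_mul a b
  simpa [Real.dist_eq] using this

lemma abs_cos_sub (a b : ℝ) : |Real.cos a - Real.cos b| ≤ |a - b| := by
  have := cos_lip.dist_le_mul a b
  simpa [Real.dist_eq] using this

variable {d : ℕ}

lemma norm_le_of_abs_le (a b : EuclideanSpace ℝ (Fin d))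
    (h : ∀ i, |a i| ≤ |b i|) : ‖a‖ ≤ ‖b‖ := by
  rw [EuclideanSpace.norm_eq, EuclideanSpace.norm_eq]
  apply Real.sqrt_le_sqrt
  apply Finset.sum_le_sum
  intro i _
  simp only [Real.norm_eq_abs]
  exact pow_le_pow_left₀ (abs_nonneg _) (h i) 2

lemma abs_coord_le_norm (a : EuclideanSpace ℝ (Fin d)) (i : Fin d) :
    |a i| ≤ ‖a‖ := by
  rw [EuclideanSpace.norm_eq]
  rw [show |a i| = Real.sqrt (|a i| ^ 2) by rw [Real.sqrt_sq (abs_nonneg _)]]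
  apply Real.sqrt_le_sqrt
  rw [show |a i| ^ 2 = ‖a i‖ ^ 2 by simp [Real.norm_eq_abs]]
  exact Finset.single_le_sum (f := fun j => ‖a j‖ ^ 2)
    (fun j _ => by positivity) (Finset.mem_univ i)

lemma gFun_lip (last : Fin d) : LipschitzWith 1 (gFun last) := by
  apply LipschitzWith.of_dist_le_mul
  intro x y
  simp only [NNReal.coe_one, one_mul, dist_eq_norm]
  apply norm_le_of_abs_le
  intro i
  rw [PiLp.sub_apply, PiLp.sub_apply, gFun_apply, gFun_apply]
  split
  · rename_i h; subst h
    calc |-Real.sin (x i) - -Real.sin (y i)| = |Real.sin (x i) - Real.sin (y i)| := by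
          rw [← abs_neg]; ring_nf
      _ ≤ |x i - y i| := abs_sin_sub _ _
      _ = _ := rfl
  · exact le_refl _

lemma HFun_sub_apply (last : Fin d) (x y u : EuclideanSpace ℝ (Fin d)) :
    (HFun last x - HFun last y) u
      = EuclideanSpace.single last ((Real.cos (y last) - Real.cos (x last)) * u last) := by
  ext i
  rw [show ((HFun last x - HFun last y) u) i
      = HFun last x u i - HFun last y u i from rfl]
  rw [HFun_apply, HFun_apply, EuclideanSpace.single_apply]
  split
  · ring
  · ring

lemma HFun_lip (last : Fin d) (x y : EuclideanSpace ℝ (Fin d)) :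
    ‖HFun last x - HFun last y‖ ≤ ‖x - y‖ := by
  apply ContinuousLinearMap.opNorm_le_bound _ (norm_nonneg _)
  intro u
  rw [HFun_sub_apply, EuclideanSpace.norm_single]
  rw [Real.norm_eq_abs, abs_mul]
  calc |Real.cos (y last) - Real.cos (x last)| * |u last|
      ≤ |y last - x last| * ‖u‖ :=
        mul_le_mul (abs_cos_sub _ _) (abs_coord_le_norm u last) (abs_nonneg _) (abs_nonneg _)
    _ ≤ ‖x - y‖ * ‖u‖ := by
        apply mul_le_mul_of_nonneg_right _ (norm_nonneg _)
        rw [show |y last - x last| = |(x - y) last| by rw [PiLp.sub_apply, abs_sub_comm]]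
        exact abs_coord_le_norm _ _
end WCF

namespace WCF

variable {d : ℕ}

lemma critical_iff (last : Fin d) (x : EuclideanSpace ℝ (Fin d)) :
    gFun last x = 0 ↔ ∃ k : ℤ, x = EuclideanSpace.single last ((k : ℝ) * Real.pi) := by
  constructor
  · intro h
    have h' : ∀ i, gFun last x i = 0 := fun i => by rw [h]; rfl
    have hlast := h' last
    rw [gFun_apply, if_pos rfl, neg_eq_zero] at hlast
    obtain ⟨k, hk⟩ := Real.sin_eq_zero_iff.1 hlast
    refine ⟨k, ?_⟩
    ext i
    rw [EuclideanSpace.single_apply]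
    split
    · rename_i hi; subst hi; exact hk.symm
    · rename_i hi
      have := h' i
      rwa [gFun_apply, if_neg hi] at this
  · rintro ⟨k, rfl⟩
    ext i
    rw [gFun_apply]
    simp only [EuclideanSpace.single_apply, if_pos rfl]
    split
    · simp [Real.sin_int_mul_pi]
    · rename_i hi; simp [if_neg hi]

lemma eigen_ge (last : Fin d) (xbar : EuclideanSpace ℝ (Fin d))
    (h0 : Real.sin (xbar last) = 0) (ρ : ℝ) (v : EuclideanSpace ℝ (Fin d))
    (hv : v ≠ 0) (heig : HFun last xbar v = ρ • v) : 1 ≤ |ρ| := by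
  have hcos : |Real.cos (xbar last)| = 1 := by
    have := Real.sin_sq_add_cos_sq (xbar last)
    rw [h0] at this
    nlinarith [abs_nonneg (Real.cos (xbar last)), sq_abs (Real.cos (xbar last))]
  obtain ⟨i, hi⟩ : ∃ i, v i ≠ 0 := by
    by_contra hc
    push_neg at hc
    exact hv (by ext i; exact hc i)
  have h : HFun last xbar v i = (ρ • v) i := by rw [heig]
  rw [HFun_apply] at h
  rw [show (ρ • v) i = ρ * v i from rfl] at h
  by_cases hil : i = last
  · subst hil
    rw [if_pos rfl] at h
    have h2 : ρ * v i = -Real.cos (xbar i) * v i := by linarith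
    have : ρ = -Real.cos (xbar i) := mul_right_cancel₀ hi h2
    rw [this, abs_neg, hcos]
  · rw [if_neg hil] at h
    have h2 : ρ * v i = 1 * v i := by linarith
    have : ρ = 1 := mul_right_cancel₀ hi h2
    rw [this]; simp

end WCF

namespace WCF

variable {d : ℕ}

lemma isLeast (last : Fin d) (f : EuclideanSpace ℝ (Fin d) → ℝ)
    (hf : ∀ x, f x = Real.cos (x last) - 1
      + (1 / 2) * ∑ i ∈ Finset.univ.erase last, (x i) ^ 2) :
    IsLeast (Set.range f) (-2) := by
  constructor
  · refine ⟨EuclideanSpace.single last Real.pi, ?_⟩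
    rw [hf]
    have h1 : (EuclideanSpace.single last Real.pi : EuclideanSpace ℝ (Fin d)) last
        = Real.pi := by simp [EuclideanSpace.single_apply]
    rw [h1, Real.cos_pi]
    have h2 : ∑ i ∈ Finset.univ.erase last,
        ((EuclideanSpace.single last Real.pi : EuclideanSpace ℝ (Fin d)) i) ^ 2 = 0 := by
      apply Finset.sum_eq_zero
      intro i hi
      rw [EuclideanSpace.single_apply, if_neg (Finset.ne_of_mem_erase hi)]
      ring
    rw [h2]; ring
  · rintro y ⟨x, rfl⟩
    rw [hf]
    have h1 : -1 ≤ Real.cos (x last) := Real.neg_one_le_cos _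
    have h2 : (0:ℝ) ≤ ∑ i ∈ Finset.univ.erase last, (x i) ^ 2 :=
      Finset.sum_nonneg fun i _ => sq_nonneg _
    linarith

lemma saddle (last : Fin d) :
    gFun last (0 : EuclideanSpace ℝ (Fin d)) = 0 ∧
    ∃ (ρ : ℝ) (v : EuclideanSpace ℝ (Fin d)), v ≠ 0 ∧ ρ < 0 ∧
      HFun last (0 : EuclideanSpace ℝ (Fin d)) v = ρ • v := by
  have h0 : (0 : EuclideanSpace ℝ (Fin d)) last = 0 := rfl
  constructor
  · ext i
    rw [gFun_apply]
    split
    · rw [h0, Real.sin_zero, neg_zero]; rfl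
    · rfl
  · refine ⟨-1, EuclideanSpace.single last 1, ?_, by norm_num, ?_⟩
    · intro hc
      have : (EuclideanSpace.single last (1 : ℝ) : EuclideanSpace ℝ (Fin d)) last
          = (0 : EuclideanSpace ℝ (Fin d)) last := by rw [hc]
      rw [EuclideanSpace.single_apply, if_pos rfl] at this
      exact one_ne_zero this
    · ext i
      rw [HFun_apply, h0, Real.cos_zero]
      by_cases hi : i = last
      · subst hi
        simp [EuclideanSpace.single_apply, PiLp.smul_apply]
      · simp [EuclideanSpace.single_apply, hi, PiLp.smul_apply]

lemma dist_to_critical (last : Fin d) (x : EuclideanSpace ℝ (Fin d)) :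
    ∃ xbar, gFun last xbar = 0 ∧
      ‖x - xbar‖ ≤ Real.pi / 2 * ‖gFun last x‖ := by
  set t := x last with ht
  set k : ℤ := round (t / Real.pi) with hk
  refine ⟨EuclideanSpace.single last ((k : ℝ) * Real.pi),
    (critical_iff last _).2 ⟨k, rfl⟩, ?_⟩
  have hpi := Real.pi_pos
  have hs : |t - (k : ℝ) * Real.pi| ≤ Real.pi / 2 := by
    have h1 : |t / Real.pi - (k : ℝ)| ≤ 1 / 2 := abs_sub_round _
    have h2 : t - (k : ℝ) * Real.pi = (t / Real.pi - (k : ℝ)) * Real.pi := by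
      field_simp
    rw [h2, abs_mul, abs_of_pos hpi]
    calc |t / Real.pi - (k : ℝ)| * Real.pi ≤ 1 / 2 * Real.pi :=
          mul_le_mul_of_nonneg_right h1 hpi.le
      _ = Real.pi / 2 := by ring
  set s := t - (k : ℝ) * Real.pi with hsdef
  have hsin_eq : |Real.sin t| = |Real.sin s| := by
    have : t = s + (k : ℝ) * Real.pi := by ring
    rw [this, Real.sin_add_int_mul_pi, abs_mul]
    rcases Int.even_or_odd k with he | ho
    · rw [he.neg_one_zpow]; simp
    · rw [ho.neg_one_zpow]; simp
  have hjordan : |s| ≤ Real.pi / 2 * |Real.sin s| := by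
    have h1 : 2 / Real.pi * |s| ≤ Real.sin |s| :=
      Real.mul_le_sin (abs_nonneg _) hs
    have h2 : Real.sin |s| = |Real.sin s| := by
      rcases le_or_gt 0 s with h | h
      · rw [abs_of_nonneg h, abs_of_nonneg]
        apply Real.sin_nonneg_of_nonneg_of_le_pi h
        calc s ≤ Real.pi / 2 := (abs_of_nonneg h) ▸ hs
          _ ≤ Real.pi := by linarith
      · rw [abs_of_neg h, Real.sin_neg]
        have hnp : Real.sin s ≤ 0 := by
          apply Real.sin_nonpos_of_nonpos_of_neg_pi_le h.le
          have := (abs_of_neg h) ▸ hs; linarith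
        rw [abs_of_nonpos hnp]
    rw [h2] at h1
    calc |s| = Real.pi / 2 * (2 / Real.pi * |s|) := by
          field_simp
      _ ≤ Real.pi / 2 * |Real.sin s| :=
          mul_le_mul_of_nonneg_left h1 (by positivity)
  have hmain : ‖x - EuclideanSpace.single last ((k : ℝ) * Real.pi)‖
      ≤ ‖(Real.pi / 2) • gFun last x‖ := by
    apply norm_le_of_abs_le
    intro i
    rw [PiLp.sub_apply, EuclideanSpace.single_apply]
    rw [show ((Real.pi / 2) • gFun last x) i = Real.pi / 2 * gFun last x i from rfl]
    rw [gFun_apply]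
    split
    · rename_i hi; subst hi
      rw [abs_mul, abs_of_pos (by positivity : (0:ℝ) < Real.pi / 2), abs_neg]
      exact hjordan.trans_eq (by rw [hsin_eq])
    · rw [abs_mul, abs_of_pos (by positivity : (0:ℝ) < Real.pi / 2)]
      rw [sub_zero]
      nlinarith [abs_nonneg (x i), Real.pi_gt_three]
  calc ‖x - EuclideanSpace.single last ((k : ℝ) * Real.pi)‖
      ≤ ‖(Real.pi / 2) • gFun last x‖ := hmain
    _ = Real.pi / 2 * ‖gFun last x‖ := by
        rw [norm_smul, Real.norm_eq_abs, abs_of_pos (by positivity)]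

end WCF

/-- Properties of the worst-case function `f(x) = cos(x_d) - 1 + ½Σ_{i<d} x_i²`:
(i) its gradient and Hessian are 1-Lipschitz; (ii) its critical points are exactly
the points `(0,…,0,kπ)`, `k ∈ ℤ`, and there all Hessian eigenvalues have absolute
value at least 1 (the 1-Morse property); (iii) its minimum value is `-2`;
(iv) the origin is a saddle point with value `0`; (v) every point is within
distance `(π/2)‖∇f(x)‖` of a critical point. -/
theorem worst_case_function_properties
    {d : ℕ} (hd : 0 < d)
    (last : Fin d) (hlast : (last : ℕ) = d - 1)
    (f : EuclideanSpace ℝ (Fin d) → ℝ)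
    (hf : ∀ x, f x = Real.cos (x last) - 1
      + (1 / 2) * ∑ i ∈ Finset.univ.erase last, (x i) ^ 2) :
    LipschitzWith 1 (gradient f) ∧
    (∀ x y : EuclideanSpace ℝ (Fin d),
      ‖fderiv ℝ (gradient f) x - fderiv ℝ (gradient f) y‖ ≤ ‖x - y‖) ∧
    ({x : EuclideanSpace ℝ (Fin d) | gradient f x = 0}
      = {x | ∃ k : ℤ, x = EuclideanSpace.single last ((k : ℝ) * Real.pi)}) ∧
    (∀ xbar : EuclideanSpace ℝ (Fin d), gradient f xbar = 0 →
      ∀ (ρ : ℝ) (v : EuclideanSpace ℝ (Fin d)), v ≠ 0 →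
        fderiv ℝ (gradient f) xbar v = ρ • v → 1 ≤ |ρ|) ∧
    IsLeast (Set.range f) (-2) ∧
    (f 0 = 0 ∧ gradient f 0 = 0 ∧
      ∃ (ρ : ℝ) (v : EuclideanSpace ℝ (Fin d)), v ≠ 0 ∧ ρ < 0 ∧
        fderiv ℝ (gradient f) 0 v = ρ • v) ∧
    (∀ x : EuclideanSpace ℝ (Fin d), ∃ xbar, gradient f xbar = 0 ∧
      ‖x - xbar‖ ≤ Real.pi / 2 * ‖gradient f x‖) := by
  have hgrad := WCF.gradient_eq last f hf
  have hfd := WCF.fderiv_gradient_eq last f hf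
  refine ⟨?_, ?_, ?_, ?_, ?_, ⟨?_, ?_, ?_⟩, ?_⟩
  · rw [hgrad]; exact WCF.gFun_lip last
  · intro x y
    rw [hfd x, hfd y]
    exact WCF.HFun_lip last x y
  · ext x
    simp only [Set.mem_setOf_eq, hgrad]
    exact WCF.critical_iff last x
  · intro xbar hbar ρ v hv heig
    rw [hgrad] at hbar
    rw [hfd xbar] at heig
    apply WCF.eigen_ge last xbar _ ρ v hv heig
    have : WCF.gFun last xbar last = (0 : EuclideanSpace ℝ (Fin d)) last := by rw [hbar]
    rw [WCF.gFun_apply, if_pos rfl] at this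
    have h0 : (0 : EuclideanSpace ℝ (Fin d)) last = 0 := rfl
    rw [h0] at this
    linarith [neg_eq_zero.1 this]
  · exact WCF.isLeast last f hf
  · rw [hf]
    have h0 : (0 : EuclideanSpace ℝ (Fin d)) last = 0 := rfl
    rw [h0, Real.cos_zero]
    have h2 : ∑ i ∈ Finset.univ.erase last,
        ((0 : EuclideanSpace ℝ (Fin d)) i) ^ 2 = 0 := by
      apply Finset.sum_eq_zero; intro i _
      rw [show (0 : EuclideanSpace ℝ (Fin d)) i = 0 from rfl]; ring
    rw [h2]; ring
  · rw [hgrad]; exact (WCF.saddle last).1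
  · obtain ⟨ρ, v, hv, hρ, heig⟩ := (WCF.saddle last).2
    exact ⟨ρ, v, hv, hρ, by rw [hfd 0]; exact heig⟩
  · intro x
    obtain ⟨xbar, h1, h2⟩ := WCF.dist_to_critical last x
    exact ⟨xbar, by rw [hgrad]; exact h1, by rw [hgrad]; exact h2⟩
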